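/- Let {𝒜_k}_{k≥1} be a sequence of labyrinth patterns with widths m_k ≥ 3, and set m(0) = 1 and m(k) = m_1⋯m_k. Let (l_1,l_2) and (r_1,r_2) be the Cartesian coordinates of the left exit and the right exit of L_∞, and for each k ≥ 1 let (x_{1,l}^k, x_{2,l}^k) be the Cartesian coordinates of the lower-left vertex of the square that is the left exit of 𝒜_k. Then l_2 = r_2 = Σ_{k=1}^∞ x_{2,l}^k / m(k−1), l_1 = 0, and r_1 = 1. -/

import Mathlib

open Set

namespace Labyrinth

/-- The closed square `S_{i,j,m} = [i/m,(i+1)/m] × [j/m,(j+1)/m]` of the `m × m` grid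
on the unit square, indexed by `p = (i,j)`. -/
def cell (m : ℕ) (p : ℕ × ℕ) : Set (ℝ × ℝ) :=
  Icc ((p.1 : ℝ) / (m : ℝ)) (((p.1 : ℝ) + 1) / (m : ℝ)) ×ˢ
    Icc ((p.2 : ℝ) / (m : ℝ)) (((p.2 : ℝ) + 1) / (m : ℝ))

/-- An `m`-pattern: a nonempty set of grid indices within the `m × m` grid. -/
def IsPattern (m : ℕ) (A : Set (ℕ × ℕ)) : Prop :=
  A.Nonempty ∧ ∀ p ∈ A, p.1 < m ∧ p.2 < m

/-- Two grid squares share a side. -/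
def SideAdj (p q : ℕ × ℕ) : Prop :=
  (p.1 = q.1 ∧ (p.2 + 1 = q.2 ∨ q.2 + 1 = p.2)) ∨
  (p.2 = q.2 ∧ (p.1 + 1 = q.1 ∨ q.1 + 1 = p.1))

/-- Two grid squares share a side or a corner. -/
def CornerAdj (p q : ℕ × ℕ) : Prop :=
  SideAdj p q ∨
  ((p.1 + 1 = q.1 ∨ q.1 + 1 = p.1) ∧ (p.2 + 1 = q.2 ∨ q.2 + 1 = p.2))

/-- The graph `𝒢(𝒜)` of a pattern: vertices are its squares, two squares being
adjacent iff they share a side. -/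
def patternGraph (A : Set (ℕ × ℕ)) : SimpleGraph ↥A where
  Adj p q := SideAdj p.1 q.1
  symm := ⟨by
    rintro ⟨p, hp⟩ ⟨q, hq⟩ h
    rcases h with ⟨h1, h2⟩ | ⟨h1, h2⟩
    · exact Or.inl ⟨h1.symm, h2.symm⟩
    · exact Or.inr ⟨h1.symm, h2.symm⟩⟩
  loopless := ⟨by
    rintro ⟨p, hp⟩ h
    rcases h with ⟨h1, h2 | h2⟩ | ⟨h1, h2 | h2⟩ <;> omega⟩

/-- The four sides of a square/pattern. -/
inductive Side | top | bottom | left | right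
deriving DecidableEq

/-- `p` is an exit square of the `m`-pattern `A` on the given side. -/
def IsExitSq (m : ℕ) (A : Set (ℕ × ℕ)) : Side → ℕ × ℕ → Prop
  | .top, p => p ∈ A ∧ p.2 = m - 1 ∧ (p.1, 0) ∈ A
  | .bottom, p => p ∈ A ∧ p.2 = 0 ∧ (p.1, m - 1) ∈ A
  | .left, p => p ∈ A ∧ p.1 = 0 ∧ (m - 1, p.2) ∈ A
  | .right, p => p ∈ A ∧ p.1 = m - 1 ∧ (0, p.2) ∈ A

/-- An `m × m`-labyrinth pattern: a nonempty `m`-pattern, `m ≥ 3`, whose graph is a tree,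
with exactly one vertical and exactly one horizontal exit pair, and no two white squares
at diagonally opposite corners. -/
def IsLabyrinthPattern (m : ℕ) (A : Set (ℕ × ℕ)) : Prop :=
  3 ≤ m ∧ IsPattern m A ∧ (patternGraph A).IsTree ∧
    (∃! i : ℕ, (i, m - 1) ∈ A ∧ (i, 0) ∈ A) ∧
    (∃! j : ℕ, (0, j) ∈ A ∧ (m - 1, j) ∈ A) ∧
    ((0, 0) ∈ A → (m - 1, m - 1) ∉ A) ∧
    ((m - 1, 0) ∈ A → (0, m - 1) ∉ A)

/-- A wild labyrinth pattern: the graph is merely connected, and there is at least one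
vertical and at least one horizontal exit pair. -/
def IsWildLabyrinthPattern (m : ℕ) (A : Set (ℕ × ℕ)) : Prop :=
  3 ≤ m ∧ IsPattern m A ∧ (patternGraph A).Connected ∧
    (∃ i : ℕ, (i, m - 1) ∈ A ∧ (i, 0) ∈ A) ∧
    (∃ j : ℕ, (0, j) ∈ A ∧ (m - 1, j) ∈ A) ∧
    ((0, 0) ∈ A → (m - 1, m - 1) ∉ A) ∧
    ((m - 1, 0) ∈ A → (0, m - 1) ∉ A)

/-- One substitution step: place a copy of the pattern `A'` (of width `m'`) into each
white square of `W`. -/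
def subst (m' : ℕ) (A' W : Set (ℕ × ℕ)) : Set (ℕ × ℕ) :=
  {q | ∃ p ∈ W, ∃ r ∈ A', q = (p.1 * m' + r.1, p.2 * m' + r.2)}

/-- The white squares `𝒲_n` of level `n`; `whites m A n` is the paper's `𝒲_n`, where
`A k` is the paper's pattern `𝒜_{k+1}` of width `m k = m_{k+1}`; level `0` is the whole
unit square. -/
def whites (m : ℕ → ℕ) (A : ℕ → Set (ℕ × ℕ)) : ℕ → Set (ℕ × ℕ)
  | 0 => {(0, 0)}
  | n + 1 => subst (m n) (A n) (whites m A n)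

/-- `m(n) = m_1 ⋯ m_n`. -/
def mProd (m : ℕ → ℕ) (n : ℕ) : ℕ := ∏ k ∈ Finset.range n, m k

/-- The black squares `ℬ_n` of level `n`. -/
def blacks (m : ℕ → ℕ) (A : ℕ → Set (ℕ × ℕ)) (n : ℕ) : Set (ℕ × ℕ) :=
  {p : ℕ × ℕ | p.1 < mProd m n ∧ p.2 < mProd m n} \ whites m A n

/-- A border square of the `m × m` grid. -/
def IsBorder (m : ℕ) (p : ℕ × ℕ) : Prop :=
  p.1 = 0 ∨ p.2 = 0 ∨ p.1 = m - 1 ∨ p.2 = m - 1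

/-- `L_n`, the union of the white squares of level `n`. -/
def levelSet (m : ℕ → ℕ) (A : ℕ → Set (ℕ × ℕ)) (n : ℕ) : Set (ℝ × ℝ) :=
  ⋃ p ∈ whites m A n, cell (mProd m n) p

/-- `L_∞ = ⋂_{n ≥ 1} L_n` (the term `n = 0` is the whole unit square). -/
def limitSet (m : ℕ → ℕ) (A : ℕ → Set (ℕ × ℕ)) : Set (ℝ × ℝ) :=
  ⋂ n, levelSet m A n

def unitSquare : Set (ℝ × ℝ) := Icc (0 : ℝ) 1 ×ˢ Icc (0 : ℝ) 1

/-- A path in a graph (with adjacency `Adj`, within the vertex set `A`)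
from `u` to `v`: a nonempty list of distinct, consecutively adjacent squares of `A`,
starting at `u` and ending at `v`. -/
def IsPathIn (Adj : ℕ × ℕ → ℕ × ℕ → Prop) (A : Set (ℕ × ℕ))
    (l : List (ℕ × ℕ)) (u v : ℕ × ℕ) : Prop :=
  l ≠ [] ∧ l.Nodup ∧ l.IsChain Adj ∧ (∀ p ∈ l, p ∈ A) ∧
    l.head? = some u ∧ l.getLast? = some v

/-- `s` is an arc between `a` and `b`: a homeomorphic image of `[0,1]`
with endpoints `a` and `b`. -/
def IsArc (s : Set (ℝ × ℝ)) (a b : ℝ × ℝ) : Prop :=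
  ∃ f : ℝ → ℝ × ℝ, ContinuousOn f (Icc 0 1) ∧ InjOn f (Icc 0 1) ∧
    f '' Icc 0 1 = s ∧ f 0 = a ∧ f 1 = b

/-- `e` is the exit point of `L_∞` of the given type: for every `n ≥ 1` it lies in the
exit square of that type of `𝒲_n`. -/
def IsExitPoint (m : ℕ → ℕ) (A : ℕ → Set (ℕ × ℕ)) (s : Side) (e : ℝ × ℝ) : Prop :=
  ∀ n, 1 ≤ n → ∃ p, IsExitSq (mProd m n) (whites m A n) s p ∧ e ∈ cell (mProd m n) p

/-- The (closed) edge of the grid square `p` of the `m × m` grid on the given side. -/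
def cellEdge (m : ℕ) (p : ℕ × ℕ) : Side → Set (ℝ × ℝ)
  | .top => Icc ((p.1 : ℝ) / (m : ℝ)) (((p.1 : ℝ) + 1) / (m : ℝ)) ×ˢ {((p.2 : ℝ) + 1) / (m : ℝ)}
  | .bottom => Icc ((p.1 : ℝ) / (m : ℝ)) (((p.1 : ℝ) + 1) / (m : ℝ)) ×ˢ {(p.2 : ℝ) / (m : ℝ)}
  | .left => {(p.1 : ℝ) / (m : ℝ)} ×ˢ Icc ((p.2 : ℝ) / (m : ℝ)) (((p.2 : ℝ) + 1) / (m : ℝ))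
  | .right => {((p.1 : ℝ) + 1) / (m : ℝ)} ×ˢ Icc ((p.2 : ℝ) / (m : ℝ)) (((p.2 : ℝ) + 1) / (m : ℝ))

/-- Directions in the grid. -/
inductive Dir | up | down | left | right
deriving DecidableEq

/-- `stepDir p q d`: the square `q` is the neighbour of `p` in direction `d`. -/
def stepDir (p q : ℕ × ℕ) : Dir → Prop
  | .up => q.1 = p.1 ∧ q.2 = p.2 + 1
  | .down => q.1 = p.1 ∧ p.2 = q.2 + 1
  | .left => q.2 = p.2 ∧ p.1 = q.1 + 1
  | .right => q.2 = p.2 ∧ q.1 = p.1 + 1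

/-- The outward direction through a given side. -/
def outDir : Side → Dir
  | .top => .up
  | .bottom => .down
  | .left => .left
  | .right => .right

def sideOfDir : Dir → Side
  | .up => .top
  | .down => .bottom
  | .left => .left
  | .right => .right

/-- The six types `A, B, C, D, E, F` of paths (and of squares within a path). -/
inductive PTy | A | B | C | D | E | F
deriving DecidableEq

instance : Fintype PTy :=
  ⟨{.A, .B, .C, .D, .E, .F}, fun x => by cases x <;> simp⟩

/-- The exit at which the `x`-path starts: `A`: top→bottom, `B`: left→right,
`C`: top→right, `D`: right→bottom, `E`: bottom→left, `F`: left→top. -/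
def startSide : PTy → Side
  | .A => .top
  | .B => .left
  | .C => .top
  | .D => .right
  | .E => .bottom
  | .F => .left

/-- The exit at which the `x`-path ends. -/
def endSide : PTy → Side
  | .A => .bottom
  | .B => .right
  | .C => .right
  | .D => .bottom
  | .E => .left
  | .F => .top

/-- The two neighbour directions characterising a square of each type. -/
def ptyDirPair : PTy → Dir × Dir
  | .A => (.up, .down)
  | .B => (.left, .right)
  | .C => (.up, .right)
  | .D => (.right, .down)
  | .E => (.down, .left)
  | .F => (.left, .up)

def ptyDirs (τ : PTy) : Set Dir := {(ptyDirPair τ).1, (ptyDirPair τ).2}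

/-- The set of directions from the `i`-th square of the path `l` towards its neighbours
within the path, where the first and last squares (exit squares) are regarded as having
an additional neighbour outside the unit square, in directions `dstart`, `dend`
respectively. -/
def pathDirs (l : List (ℕ × ℕ)) (dstart dend : Dir) (i : ℕ) : Set Dir :=
  {d | (∃ p q, l[i]? = some p ∧ l[i - 1]? = some q ∧ 0 < i ∧ stepDir p q d)
    ∨ (∃ p q, l[i]? = some p ∧ l[i + 1]? = some q ∧ stepDir p q d)
    ∨ (i = 0 ∧ d = dstart)
    ∨ (i + 1 = l.length ∧ d = dend)}

/-- The number of `τ`-squares of the path `l` (with outward exit directions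
`dstart`, `dend`). -/
noncomputable def countTy (l : List (ℕ × ℕ)) (dstart dend : Dir) (τ : PTy) : ℕ :=
  {i | i < l.length ∧ pathDirs l dstart dend i = ptyDirs τ}.ncard

/-- `M(n) = M_1 ⋅ M_2 ⋅ ⋯ ⋅ M_n`. -/
def matProd (M : ℕ → Matrix PTy PTy ℕ) (n : ℕ) : Matrix PTy PTy ℕ :=
  ((List.range n).map M).prod

/-- A simple closed curve: a subspace homeomorphic to the circle. -/
def IsSimpleClosedCurve (s : Set (ℝ × ℝ)) : Prop :=
  Nonempty (↥s ≃ₜ AddCircle (1 : ℝ))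

/-- The number of `δ`-mesh squares meeting `E`. -/
noncomputable def meshCount (δ : ℝ) (E : Set (ℝ × ℝ)) : ℕ :=
  {q : ℤ × ℤ | (E ∩ (Icc ((q.1 : ℝ) * δ) (((q.1 : ℝ) + 1) * δ) ×ˢ
      Icc ((q.2 : ℝ) * δ) (((q.2 : ℝ) + 1) * δ))).Nonempty}.ncard

/-- The lower box-counting dimension of `E ⊆ ℝ²`. -/
noncomputable def lowerBoxDim (E : Set (ℝ × ℝ)) : ℝ :=
  Filter.liminf (fun δ : ℝ => Real.log (meshCount δ E) / (-Real.log δ)) (nhdsWithin 0 (Ioi 0))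

/-- The upper box-counting dimension of `E ⊆ ℝ²`. -/
noncomputable def upperBoxDim (E : Set (ℝ × ℝ)) : ℝ :=
  Filter.limsup (fun δ : ℝ => Real.log (meshCount δ E) / (-Real.log δ)) (nhdsWithin 0 (Ioi 0))

def Jrow (m lr : ℕ → ℕ) : ℕ → ℕ
  | 0 => 0
  | n + 1 => Jrow m lr n * m n + lr n

lemma mProd_succ (m : ℕ → ℕ) (n : ℕ) : mProd m (n + 1) = mProd m n * m n :=
  Finset.prod_range_succ m n

lemma three_pow_le_mProd {m : ℕ → ℕ} (hm : ∀ k, 3 ≤ m k) (n : ℕ) :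
    3 ^ n ≤ mProd m n := by
  induction n with
  | zero => simp [mProd]
  | succ n ih =>
    rw [mProd_succ, pow_succ]
    exact Nat.mul_le_mul ih (hm n)

lemma mProd_pos {m : ℕ → ℕ} (hm : ∀ k, 3 ≤ m k) (n : ℕ) : 0 < mProd m n :=
  lt_of_lt_of_le (pow_pos (by norm_num) n) (three_pow_le_mProd hm n)

lemma whites_lt {m : ℕ → ℕ} {A : ℕ → Set (ℕ × ℕ)}
    (hpat : ∀ k, IsPattern (m k) (A k)) :
    ∀ n, ∀ p ∈ whites m A n, p.1 < mProd m n ∧ p.2 < mProd m n := by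
  intro n
  induction n with
  | zero =>
    rintro p hp
    simp only [whites, mem_singleton_iff] at hp
    subst hp
    simp [mProd]
  | succ n ih =>
    rintro p hp
    obtain ⟨q, hq, r, hr, rfl⟩ := hp
    obtain ⟨hq1, hq2⟩ := ih q hq
    obtain ⟨hr1, hr2⟩ := (hpat n).2 r hr
    rw [mProd_succ]
    constructor
    · calc q.1 * m n + r.1 < q.1 * m n + m n := by omega
        _ = (q.1 + 1) * m n := by ring
        _ ≤ mProd m n * m n := Nat.mul_le_mul_right _ hq1
    · calc q.2 * m n + r.2 < q.2 * m n + m n := by omega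
        _ = (q.2 + 1) * m n := by ring
        _ ≤ mProd m n * m n := Nat.mul_le_mul_right _ hq2

lemma exitRow_eq {m : ℕ → ℕ} {A : ℕ → Set (ℕ × ℕ)} {lr : ℕ → ℕ}
    (hm : ∀ k, 3 ≤ m k) (hpat : ∀ k, IsPattern (m k) (A k))
    (huniq : ∀ k, ∃! j : ℕ, (0, j) ∈ A k ∧ (m k - 1, j) ∈ A k)
    (hlr : ∀ k, (0, lr k) ∈ A k ∧ (m k - 1, lr k) ∈ A k) :
    ∀ n, ∀ j, (0, j) ∈ whites m A n → (mProd m n - 1, j) ∈ whites m A n →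
      j = Jrow m lr n := by
  intro n
  induction n with
  | zero =>
    intro j h1 _
    simp only [whites, mem_singleton_iff, Prod.mk.injEq] at h1
    simpa [Jrow] using h1.2
  | succ n ih =>
    intro j h1 h2
    obtain ⟨⟨p1, p2⟩, hp, ⟨r1, r2⟩, hr, heq1⟩ := h1
    obtain ⟨⟨q1, q2⟩, hq, ⟨s1, s2⟩, hs, heq2⟩ := h2
    simp only [Prod.mk.injEq] at heq1 heq2
    have hmn : 3 ≤ m n := hm n
    have hMn : 0 < mProd m n := mProd_pos hm n
    obtain ⟨hq1M, -⟩ := whites_lt hpat n _ hq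
    obtain ⟨hr1m, hr2m⟩ := (hpat n).2 _ hr
    obtain ⟨hs1m, hs2m⟩ := (hpat n).2 _ hs
    simp only at hq1M hr1m hr2m hs1m hs2m
    -- from heq1.1 : 0 = p1 * m n + r1
    have hp1 : p1 = 0 := by
      rcases Nat.mul_eq_zero.mp (Nat.add_eq_zero.mp heq1.1.symm).1 with h | h
      · exact h
      · omega
    have hr1 : r1 = 0 := (Nat.add_eq_zero.mp heq1.1.symm).2
    -- from heq2.1 : mProd m (n+1) - 1 = q1 * m n + s1
    have key : mProd m (n + 1) = q1 * m n + s1 + 1 := by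
      have hpos : 1 ≤ mProd m (n + 1) := mProd_pos hm (n + 1)
      omega
    have h5 : mProd m n * m n ≤ (q1 + 1) * m n := by
      rw [← mProd_succ, key]
      calc q1 * m n + s1 + 1 ≤ q1 * m n + m n := by omega
        _ = (q1 + 1) * m n := by ring
    have hq1e : q1 = mProd m n - 1 := by
      have := Nat.le_of_mul_le_mul_right h5 (by omega : 0 < m n)
      omega
    have hs1e : s1 = m n - 1 := by
      have h6 : (q1 + 1) * m n = mProd m n * m n := by
        congr 1
        omega
      rw [Nat.succ_mul, ← mProd_succ, key] at h6
      omega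
    -- div/mod uniqueness
    have e1 : j / m n = p2 := by
      rw [heq1.2, mul_comm, Nat.mul_add_div (by omega), Nat.div_eq_of_lt hr2m, add_zero]
    have e2 : j / m n = q2 := by
      rw [heq2.2, mul_comm, Nat.mul_add_div (by omega), Nat.div_eq_of_lt hs2m, add_zero]
    have e3 : j % m n = r2 := by
      rw [heq1.2, mul_comm, Nat.mul_add_mod, Nat.mod_eq_of_lt hr2m]
    have e4 : j % m n = s2 := by
      rw [heq2.2, mul_comm, Nat.mul_add_mod, Nat.mod_eq_of_lt hs2m]
    have hpq : p2 = q2 := by omega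
    have hrs : r2 = s2 := by omega
    have hp2 : p2 = Jrow m lr n := by
      apply ih p2
      · rw [← hp1]; exact hp
      · rw [hpq, ← hq1e]; exact hq
    have hr2 : r2 = lr n := by
      obtain ⟨j0, _, hu⟩ := huniq n
      have h1' : r2 = j0 := hu r2 ⟨by rw [← hr1]; exact hr, by rw [hrs, ← hs1e]; exact hs⟩
      have h2' : lr n = j0 := hu (lr n) (hlr n)
      omega
    show j = Jrow m lr n * m n + lr n
    rw [heq1.2, hp2, hr2]

lemma partial_sum {m lr : ℕ → ℕ} (hm : ∀ k, 3 ≤ m k) (n : ℕ) :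
    ∑ k ∈ Finset.range n, ((lr k : ℝ) / (m k : ℝ)) / (mProd m k : ℝ) =
      (Jrow m lr n : ℝ) / (mProd m n : ℝ) := by
  induction n with
  | zero => simp [Jrow, mProd]
  | succ n ih =>
    rw [Finset.sum_range_succ, ih]
    have hMn : (mProd m n : ℝ) ≠ 0 := by
      have := mProd_pos hm n; positivity
    have hmn : (m n : ℝ) ≠ 0 := by
      have := hm n; positivity
    show _ = ((Jrow m lr n * m n + lr n : ℕ) : ℝ) / (mProd m (n + 1) : ℝ)
    rw [mProd_succ]
    push_cast
    field_simp


end Labyrinth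
open Labyrinth in
/-- coordinates of the left and right exits of `L_∞`. With `lr k` the row
index of the left exit square of `𝒜_{k+1}` (so its lower-left vertex has coordinates
`(0, lr k / m k)`), the left exit is `(0, Σ_k (lr k / m k)/m(k))` and the right exit is
`(1, Σ_k (lr k / m k)/m(k))`. -/
theorem left_right_exit_coords (m : ℕ → ℕ) (A : ℕ → Set (ℕ × ℕ))
    (hlab : ∀ k, IsLabyrinthPattern (m k) (A k))
    (l r : ℝ × ℝ)
    (hl : IsExitPoint m A Side.left l) (hr : IsExitPoint m A Side.right r)
    (lr : ℕ → ℕ) (hlr : ∀ k, IsExitSq (m k) (A k) Side.left (0, lr k)) :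
    l.2 = ∑' k, ((lr k : ℝ) / (m k : ℝ)) / (mProd m k : ℝ) ∧
    r.2 = ∑' k, ((lr k : ℝ) / (m k : ℝ)) / (mProd m k : ℝ) ∧
    l.1 = 0 ∧ r.1 = 1 := by
  classical
  have hm : ∀ k, 3 ≤ m k := fun k => (hlab k).1
  have hpat : ∀ k, IsPattern (m k) (A k) := fun k => (hlab k).2.1
  have huniq : ∀ k, ∃! j : ℕ, (0, j) ∈ A k ∧ (m k - 1, j) ∈ A k :=
    fun k => (hlab k).2.2.2.2.1
  have hlr' : ∀ k, (0, lr k) ∈ A k ∧ (m k - 1, lr k) ∈ A k := by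
    intro k
    obtain ⟨h1, -, h3⟩ := hlr k
    exact ⟨h1, h3⟩
  have hMpos : ∀ n, (0 : ℝ) < (mProd m n : ℝ) := by
    intro n; exact_mod_cast mProd_pos hm n
  have hMge : ∀ n, ((3 : ℝ)) ^ n ≤ (mProd m n : ℝ) := by
    intro n; exact_mod_cast three_pow_le_mProd hm n
  -- convergence of 1 / mProd
  have hinv : Filter.Tendsto (fun n => (1 : ℝ) / (mProd m n : ℝ)) Filter.atTop (nhds 0) := by
    apply squeeze_zero (fun n => by positivity) (g := fun n => ((1:ℝ)/3) ^ n)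
    · intro n
      rw [div_pow, one_pow]
      exact one_div_le_one_div_of_le (by positivity) (hMge n)
    · exact tendsto_pow_atTop_nhds_zero_of_lt_one (by norm_num) (by norm_num)
  -- summability
  set f : ℕ → ℝ := fun k => ((lr k : ℝ) / (m k : ℝ)) / (mProd m k : ℝ) with hf
  have hlrm : ∀ k, lr k < m k := fun k => ((hpat k).2 _ (hlr' k).1).2
  have hfle : ∀ k, f k ≤ ((1:ℝ)/3) ^ k := by
    intro k
    have h1 : (lr k : ℝ) / (m k : ℝ) ≤ 1 := by
      rw [div_le_one (by have := hm k; positivity : (0:ℝ) < (m k : ℝ))]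
      exact_mod_cast (hlrm k).le
    calc f k ≤ 1 / (mProd m k : ℝ) := by
          show ((lr k : ℝ) / (m k : ℝ)) / (mProd m k : ℝ) ≤ 1 / (mProd m k : ℝ)
          exact (div_le_div_iff_of_pos_right (hMpos k)).mpr h1
      _ ≤ ((1:ℝ)/3) ^ k := by
          rw [div_pow, one_pow]
          exact one_div_le_one_div_of_le (by positivity) (hMge k)
  have hsum : Summable f :=
    Summable.of_nonneg_of_le (fun k => by have := hm k; positivity) hfle
      (summable_geometric_of_lt_one (by norm_num) (by norm_num))
  set S : ℝ := ∑' k, f k with hS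
  -- partial sums tend to S
  have htend : Filter.Tendsto (fun n => (Jrow m lr n : ℝ) / (mProd m n : ℝ))
      Filter.atTop (nhds S) := by
    have := hsum.hasSum.tendsto_sum_nat
    exact this.congr (fun n => partial_sum hm n)
  have htend' : Filter.Tendsto (fun n => (Jrow m lr (n+1) : ℝ) / (mProd m (n+1) : ℝ))
      Filter.atTop (nhds S) := htend.comp (Filter.tendsto_add_atTop_nat 1)
  have hinv' : Filter.Tendsto (fun n => (1 : ℝ) / (mProd m (n+1) : ℝ))
      Filter.atTop (nhds 0) := hinv.comp (Filter.tendsto_add_atTop_nat 1)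
  -- bounds from exit points
  have hlb : ∀ n : ℕ, (Jrow m lr (n+1) : ℝ) / (mProd m (n+1) : ℝ) ≤ l.2 ∧
      l.2 ≤ (Jrow m lr (n+1) : ℝ) / (mProd m (n+1) : ℝ) + 1 / (mProd m (n+1) : ℝ) ∧
      0 ≤ l.1 ∧ l.1 ≤ 1 / (mProd m (n+1) : ℝ) := by
    intro n
    obtain ⟨⟨p1, p2⟩, hpe, hcell⟩ := hl (n+1) (by omega)
    obtain ⟨hpW, hp1, hpR⟩ := hpe
    simp only at hp1 hpR
    subst hp1
    have hp2 : p2 = Jrow m lr (n+1) :=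
      exitRow_eq hm hpat huniq hlr' (n+1) p2 hpW hpR
    subst hp2
    obtain ⟨h1, h2⟩ := hcell
    simp only [mem_Icc] at h1 h2
    have hM := hMpos (n+1)
    refine ⟨h2.1, ?_, ?_, ?_⟩
    · have := h2.2
      rw [← add_div]
      simpa using this
    · simpa using h1.1.trans_eq' (by simp)
    · simpa using h1.2
  have hrb : ∀ n : ℕ, (Jrow m lr (n+1) : ℝ) / (mProd m (n+1) : ℝ) ≤ r.2 ∧
      r.2 ≤ (Jrow m lr (n+1) : ℝ) / (mProd m (n+1) : ℝ) + 1 / (mProd m (n+1) : ℝ) ∧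
      1 - 1 / (mProd m (n+1) : ℝ) ≤ r.1 ∧ r.1 ≤ 1 := by
    intro n
    obtain ⟨⟨p1, p2⟩, hpe, hcell⟩ := hr (n+1) (by omega)
    obtain ⟨hpW, hp1, hpR⟩ := hpe
    simp only at hp1 hpR
    subst hp1
    have hp2 : p2 = Jrow m lr (n+1) := by
      apply exitRow_eq hm hpat huniq hlr' (n+1) p2 hpR hpW
    subst hp2
    obtain ⟨h1, h2⟩ := hcell
    simp only [mem_Icc] at h1 h2
    have hM := hMpos (n+1)
    have hM1 : 1 ≤ mProd m (n+1) := mProd_pos hm (n+1)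
    have hcast : ((mProd m (n+1) - 1 : ℕ) : ℝ) = (mProd m (n+1) : ℝ) - 1 := by
      push_cast [Nat.cast_sub hM1]
      ring
    refine ⟨h2.1, ?_, ?_, ?_⟩
    · have := h2.2
      rw [← add_div]
      simpa using this
    · have := h1.1
      rw [hcast] at this
      calc 1 - 1 / (mProd m (n+1) : ℝ) = ((mProd m (n+1) : ℝ) - 1) / (mProd m (n+1) : ℝ) := by
            field_simp
        _ ≤ r.1 := this
    · have := h1.2
      rw [hcast] at this
      calc r.1 ≤ ((mProd m (n+1) : ℝ) - 1 + 1) / (mProd m (n+1) : ℝ) := this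
        _ = 1 := by field_simp; ring
  -- l.2 = S and r.2 = S
  have key2 : ∀ x : ℝ,
      (∀ n : ℕ, (Jrow m lr (n+1) : ℝ) / (mProd m (n+1) : ℝ) ≤ x ∧
        x ≤ (Jrow m lr (n+1) : ℝ) / (mProd m (n+1) : ℝ) + 1 / (mProd m (n+1) : ℝ)) →
      x = S := by
    intro x hx
    have hd : Filter.Tendsto
        (fun n => x - (Jrow m lr (n+1) : ℝ) / (mProd m (n+1) : ℝ))
        Filter.atTop (nhds 0) := by
      apply squeeze_zero (fun n => by have := (hx n).1; linarith)
        (fun n => by have := (hx n).2; linarith) hinv'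
    have : Filter.Tendsto
        (fun n => x - (x - (Jrow m lr (n+1) : ℝ) / (mProd m (n+1) : ℝ)))
        Filter.atTop (nhds (x - 0)) := tendsto_const_nhds.sub hd
    simp only [sub_sub_cancel, sub_zero] at this
    exact tendsto_nhds_unique this htend'
  refine ⟨key2 l.2 (fun n => ⟨(hlb n).1, (hlb n).2.1⟩),
    key2 r.2 (fun n => ⟨(hrb n).1, (hrb n).2.1⟩), ?_, ?_⟩
  · refine le_antisymm ?_ (hlb 0).2.2.1
    exact ge_of_tendsto' hinv' (fun n => (hlb n).2.2.2)
  · refine le_antisymm (hrb 0).2.2.2 ?_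
    have h1 : Filter.Tendsto (fun n => 1 - (1 : ℝ) / (mProd m (n+1) : ℝ))
        Filter.atTop (nhds (1 - 0)) := tendsto_const_nhds.sub hinv'
    rw [sub_zero] at h1
    exact le_of_tendsto' h1 (fun n => (hrb n).2.2.1)
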